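/- arXiv:1707.01352 — 2 statements merged into one kernel-verified Lean document; each statement's English description precedes it below -/
import Mathlib

section
/- Let λ > 0 be a tiling parameter (λ^{−1} an integer ≥ 2) and let ρ be a bounded measurable function on ℝ², identically zero outside the open unit square Q = (−1/2,1/2)², such that ⨍_Q ρ(y)dy = 0 for every tile Q ∈ T_λ. Then the geometric mixing scale satisfies G(ρ) ≤ C₁·λ, where C₁ = C₁(κ) (one may take C₁ = 4√2/κ). -/
open MeasureTheory Metric Set Filter ENNReal Topology

noncomputable section

/-- Points of the plane. -/
abbrev Pt : Type := EuclideanSpace ℝ (Fin 2)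

/-- The open unit square `Q = (−1/2, 1/2)²`. -/
def unitSq : Set Pt :=
  {x : Pt | x 0 ∈ Set.Ioo (-(1/2) : ℝ) (1/2) ∧ x 1 ∈ Set.Ioo (-(1/2) : ℝ) (1/2)}

/-- `lam` is an admissible tiling parameter: `lam⁻¹` is an integer `≥ 2`. -/
def TilingParam (lam : ℝ) : Prop := ∃ m : ℕ, 2 ≤ m ∧ lam = 1 / (m : ℝ)

/-- The open tile with indices `k, h` in the tiling of the unit square with tiles of side `lam`. -/
def tile (lam : ℝ) (k h : ℕ) : Set Pt :=
  {x : Pt | x 0 ∈ Set.Ioo (-(1/2) + (k : ℝ) * lam) (-(1/2) + ((k : ℝ) + 1) * lam) ∧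
            x 1 ∈ Set.Ioo (-(1/2) + (h : ℝ) * lam) (-(1/2) + ((h : ℝ) + 1) * lam)}

/-- `Q` is a tile of the tiling `T_lam` of the unit square. -/
def IsTile (lam : ℝ) (Q : Set Pt) : Prop :=
  ∃ k h : ℕ, ((k : ℝ) + 1) * lam ≤ 1 ∧ ((h : ℝ) + 1) * lam ≤ 1 ∧ Q = tile lam k h

/-- The center `r_Q` of the tile with indices `k, h` and side `lam`. -/
def tileCenter (lam : ℝ) (k h : ℕ) : Pt :=
  EuclideanSpace.single 0 (-(1/2) + ((k : ℝ) + 1/2) * lam) +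
    EuclideanSpace.single 1 (-(1/2) + ((h : ℝ) + 1/2) * lam)

/-- The `L^∞` norm of a scalar function on the plane. -/
def supNorm (ρ : Pt → ℝ) : ℝ := (eLpNorm ρ ⊤ volume).toReal

/-- Geometric mixing scale with accuracy parameter `κ`: the infimum of all `ε > 0` such that
the average of `ρ` on every ball of radius `ε` is at most `κ‖ρ‖_∞` in absolute value. -/
def geomScale (κ : ℝ) (ρ : Pt → ℝ) : ℝ :=
  sInf {ε : ℝ | 0 < ε ∧ ∀ x : Pt, |⨍ y in ball x ε, ρ y| ≤ κ * supNorm ρ}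

/-- Homogeneous `Ḣ^{-1}(ℝ²)` norm (functional mixing scale), defined by duality. -/
def negNorm (ρ : Pt → ℝ) : ℝ :=
  sSup {v : ℝ | ∃ ξ : Pt → ℝ, ContDiff ℝ (⊤ : ℕ∞) ξ ∧
    (∫ x : Pt, ‖fderiv ℝ ξ x‖ ^ 2) ≤ 1 ∧ v = ∫ x : Pt, ρ x * ξ x}

/-- Characteristic length scale of `A` with respect to `E` (with accuracy `κ` and parameter
`sbar`): the supremum of radii of balls contained in `E` that are filled with `A` in
proportion more than `1 - ((1-κ)/2)·sbar`. -/
def lengthScale (κ sbar : ℝ) (E A : Set Pt) : ℝ :=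
  sSup {r : ℝ | ∃ x : Pt, ball x r ⊆ E ∧
    1 - (1 - κ) / 2 * sbar <
      (volume (A ∩ ball x r)).toReal / (volume (ball x r)).toReal}

/-- A vector field on the plane is divergence free. -/
def DivFree (v : Pt → Pt) : Prop :=
  ∀ x : Pt, (∑ i : Fin 2, fderiv ℝ (fun y => v y i) x (EuclideanSpace.single i 1)) = 0

/-- `X` is the (incompressible, regular Lagrangian) flow map of the velocity field `u`. -/
def IsFlowMap (u : ℝ → Pt → Pt) (X : ℝ → Pt → Pt) : Prop :=
  (∀ x, X 0 x = x) ∧ (∀ x t, HasDerivAt (fun s => X s x) (u t (X t x)) t) ∧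
    (∀ t, MeasurePreserving (X t) volume volume)

/-- `ρ` solves the continuity equation `∂_t ρ + div(uρ) = 0` with divergence-free field `u`,
i.e. `ρ` is transported along the flow of `u`. -/
def TransportedBy (u : ℝ → Pt → Pt) (ρ : ℝ → Pt → ℝ) : Prop :=
  ∃ X, IsFlowMap u X ∧ ∀ t x, ρ t (X t x) = ρ 0 x

/-- Gagliardo-type homogeneous seminorm of fractional order `k + r` with exponent `p`. -/
def gagliardo (k : ℕ) (r : ℝ) (p : ℝ≥0∞) (f : Pt → Pt) : ℝ≥0∞ :=
  eLpNorm (fun z : Pt × Pt =>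
      ‖iteratedFDeriv ℝ k f z.1 - iteratedFDeriv ℝ k f z.2‖ /
        ‖z.1 - z.2‖ ^ (2 / p.toReal + r)) p volume

/-- Homogeneous Sobolev seminorm `Ẇ^{s,p}(ℝ²)` of a vector field: for integer `s` it is the
`L^p` norm of the `s`-th derivative, otherwise the Gagliardo seminorm of order `s`. -/
def sobolevSeminorm (s : ℝ) (p : ℝ≥0∞) (f : Pt → Pt) : ℝ≥0∞ :=
  if (⌊s⌋₊ : ℝ) = s then eLpNorm (fun x => ‖iteratedFDeriv ℝ ⌊s⌋₊ f x‖) p volume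
  else gagliardo ⌊s⌋₊ (s - ⌊s⌋₊) p f

/-- `‖∇ v‖_{L^p(ℝ²)}` as a real number. -/
def gradLp (p : ℝ) (v : Pt → Pt) : ℝ :=
  (eLpNorm (fun x => ‖fderiv ℝ v x‖) (ENNReal.ofReal p) volume).toReal

/-- `‖∇^k v‖_{L^p(ℝ²)}` as a real number. -/
def gradkLp (k : ℕ) (p : ℝ) (v : Pt → Pt) : ℝ :=
  (eLpNorm (fun x => ‖iteratedFDeriv ℝ k v x‖) (ENNReal.ofReal p) volume).toReal

/-- `‖∇^k v‖_{L^p(Q)}` as a real number. -/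
def gradkLpQ (k : ℕ) (p : ℝ) (v : Pt → Pt) : ℝ :=
  (eLpNorm (fun x => ‖iteratedFDeriv ℝ k v x‖) (ENNReal.ofReal p)
    (volume.restrict unitSq)).toReal

/-- Time steps `T_n = ∑_{i=0}^{n-1} τ^i`. -/
def timeStep (τ : ℝ) (n : ℕ) : ℝ := ∑ i ∈ Finset.range n, τ ^ i

/-- Cellular basic building block `(u₀, ρ₀) ∈ B_{λ,a,p,θ,s}`. -/
structure BuildingBlock (κ sbar lam a : ℝ) (p : ℝ≥0∞) (θ s : ℝ)
    (u0 : ℝ → Pt → Pt) (ρ0 : ℝ → Pt → ℝ) : Prop where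
  /-- `u₀ ∈ L^∞_t(Ẇ^{s,p}_x)` on `0 ≤ t ≤ 1` -/
  sobolev_bound : ∃ M : ℝ≥0∞, M ≠ ⊤ ∧ ∀ t ∈ Set.Icc (0:ℝ) 1, sobolevSeminorm s p (u0 t) ≤ M
  /-- `u₀` is divergence free -/
  div_free : ∀ t ∈ Set.Icc (0:ℝ) 1, DivFree (u0 t)
  /-- `u₀ = 0` on `∂Q` and outside `Q` -/
  zero_outside : ∀ t, ∀ x : Pt, x ∉ unitSq → u0 t x = 0
  /-- `ρ₀` solves the continuity equation with velocity field `u₀` -/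
  transport : TransportedBy u0 ρ0
  /-- binary mean-free initial datum: `1` on `A`, constant `c` on `Q ∖ A`,
  with `LS_Q(A) ≥ a` and `|A| = θ` -/
  init : ∃ (A : Set Pt) (c : ℝ), MeasurableSet A ∧ A ⊆ unitSq ∧
      volume A = ENNReal.ofReal θ ∧ a ≤ lengthScale κ sbar unitSq A ∧
      (∀ x ∈ A, ρ0 0 x = 1) ∧ (∀ x ∈ unitSq \ A, ρ0 0 x = c) ∧
      (∀ x : Pt, x ∉ unitSq → ρ0 0 x = 0) ∧ θ * 1 + (1 - θ) * c = 0
  /-- the tracer is equally distributed among all tiles at time `1` -/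
  mixed : ∀ Q : Set Pt, IsTile lam Q → ∫ x in Q, ρ0 1 x = 0

/-- The pair `(u, ρ)` is of `(λ, a, p, θ, s)`-cellular type with time parameter `τ`:
on each time interval `[T_n, T_{n+1})` and each tile of `T_{λ^n}` it is a rescaled
translated basic building block. -/
structure IsCellular (κ sbar lam a : ℝ) (p : ℝ≥0∞) (θ s τ : ℝ)
    (u : ℝ → Pt → Pt) (ρ : ℝ → Pt → ℝ) : Prop where
  transport : TransportedBy u ρ
  patch : ∀ n k h : ℕ, IsTile (lam ^ n) (tile (lam ^ n) k h) →
    ∃ u0 ρ0, BuildingBlock κ sbar lam a p θ s u0 ρ0 ∧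
      ∀ t ∈ Set.Ico (timeStep τ n) (timeStep τ (n + 1)), ∀ x ∈ tile (lam ^ n) k h,
        u t x = (lam ^ n / τ ^ n) •
            u0 ((t - timeStep τ n) / τ ^ n) ((lam ^ n)⁻¹ • (x - tileCenter (lam ^ n) k h)) ∧
        ρ t x = ρ0 ((t - timeStep τ n) / τ ^ n) ((lam ^ n)⁻¹ • (x - tileCenter (lam ^ n) k h))

/-- Minimal cost `M_{λ,a,p}`: the infimum of `∫₀¹ ‖∇u₀(t,·)‖_{L^p} dt` over all cellular
basic building blocks. -/
def minCost (κ sbar lam a p θ s : ℝ) : ℝ :=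
  sInf {v : ℝ | ∃ u0 ρ0, BuildingBlock κ sbar lam a (ENNReal.ofReal p) θ s u0 ρ0 ∧
    v = ∫ t in Set.Icc (0:ℝ) 1, gradLp p (u0 t)}

/-- `u` is a universal mixer: every bounded mean-free initial datum gets mixed. -/
def UniversalMixer (κ : ℝ) (u : ℝ → Pt → Pt) : Prop :=
  ∀ ρ0 : Pt → ℝ, Measurable ρ0 → (∃ M : ℝ, ∀ x, |ρ0 x| ≤ M) → Integrable ρ0 →
    (∫ x : Pt, ρ0 x) = 0 →
    ∀ ρ : ℝ → Pt → ℝ, ρ 0 = ρ0 → TransportedBy u ρ →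
      Tendsto (fun t => geomScale κ (ρ t)) atTop (𝓝 0) ∧
      Tendsto (fun t => negNorm (ρ t)) atTop (𝓝 0)

/-- `a(t)`: the supremum over `x` of the infimum of all radii `r` such that the trajectory
starting at `x` stays in `B(X(t,x), r)` for all times `s ≥ t`. -/
def confRad (X : ℝ → Pt → Pt) (t : ℝ) : ℝ≥0∞ :=
  ⨆ x : Pt, sInf {r : ℝ≥0∞ | ∀ s : ℝ, t ≤ s → edist (X s x) (X t x) < r}



namespace GeomScaleAux

open Real

lemma vol_prod (s t : Set ℝ) (hs : MeasurableSet s) (ht : MeasurableSet t) :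
    volume {x : Pt | x 0 ∈ s ∧ x 1 ∈ t} = volume s * volume t := by
  have h : {x : Pt | x 0 ∈ s ∧ x 1 ∈ t} =
      (MeasurableEquiv.toLp 2 (Fin 2 → ℝ)).symm ⁻¹'
        (Set.univ.pi (fun i : Fin 2 => if i = 0 then s else t)) := by
    ext x
    simp [Set.mem_pi, Fin.forall_fin_two]
  rw [h, (EuclideanSpace.volume_preserving_symm_measurableEquiv_toLp (Fin 2)).measure_preimage
      ((MeasurableSet.univ_pi (fun i => by split <;> assumption)).nullMeasurableSet),
    volume_pi_pi]
  simp [Fin.prod_univ_two]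

lemma coord_abs_le (x y : Pt) (i : Fin 2) : |x i - y i| ≤ dist x y := by
  rw [EuclideanSpace.dist_eq, ← Real.sqrt_sq_eq_abs]
  apply Real.sqrt_le_sqrt
  rw [show (x i - y i)^2 = dist (x i) (y i) ^ 2 by rw [Real.dist_eq, sq_abs]]
  exact Finset.single_le_sum (f := fun j => dist (x j) (y j) ^ 2)
    (fun j _ => sq_nonneg _) (Finset.mem_univ i)

lemma dist_lt_of_coords {x y : Pt} {l : ℝ} (h0 : |x 0 - y 0| < l) (h1 : |x 1 - y 1| < l) :
    dist x y < Real.sqrt 2 * l := by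
  have hl : 0 < l := lt_of_le_of_lt (abs_nonneg _) h0
  rw [EuclideanSpace.dist_eq, Fin.sum_univ_two]
  have h2 : Real.sqrt 2 * l = Real.sqrt (l^2 + l^2) := by
    rw [show l^2 + l^2 = 2 * l^2 by ring, Real.sqrt_mul (by norm_num), Real.sqrt_sq hl.le]
  rw [h2]
  apply Real.sqrt_lt_sqrt (by positivity)
  have d0 : dist (x 0) (y 0) ^ 2 < l ^ 2 := by
    rw [Real.dist_eq]; exact pow_lt_pow_left₀ h0 (abs_nonneg _) (by norm_num)
  have d1 : dist (x 1) (y 1) ^ 2 < l ^ 2 := by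
    rw [Real.dist_eq]; exact pow_lt_pow_left₀ h1 (abs_nonneg _) (by norm_num)
  linarith

lemma hyperplane_null (i : Fin 2) (c : ℝ) : volume {x : Pt | x i = c} = 0 := by
  match i with
  | 0 =>
    have h : {x : Pt | x 0 = c} = {x : Pt | x 0 ∈ ({c} : Set ℝ) ∧ x 1 ∈ (Set.univ : Set ℝ)} := by
      ext x; simp
    rw [h, vol_prod _ _ (measurableSet_singleton c) MeasurableSet.univ]
    simp
  | 1 =>
    have h : {x : Pt | x 1 = c} = {x : Pt | x 0 ∈ (Set.univ : Set ℝ) ∧ x 1 ∈ ({c} : Set ℝ)} := by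
      ext x; simp
    rw [h, vol_prod _ _ MeasurableSet.univ (measurableSet_singleton c)]
    simp

lemma measurable_coord (i : Fin 2) : Measurable (fun x : Pt => x i) :=
  (measurable_pi_apply i).comp (WithLp.measurable_ofLp 2 (Fin 2 → ℝ))

lemma tile_measurable (lam : ℝ) (k h : ℕ) : MeasurableSet (tile lam k h) := by
  have : tile lam k h = ((fun x : Pt => x 0) ⁻¹' Set.Ioo _ _) ∩ ((fun x : Pt => x 1) ⁻¹' Set.Ioo _ _) := rfl
  rw [this]
  exact ((measurable_coord 0) measurableSet_Ioo).inter ((measurable_coord 1) measurableSet_Ioo)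

lemma tile_volume (lam : ℝ) (hlam : 0 < lam) (k h : ℕ) :
    volume (tile lam k h) = ENNReal.ofReal lam * ENNReal.ofReal lam := by
  have : tile lam k h = {x : Pt | x 0 ∈ Set.Ioo (-(1/2) + (k : ℝ) * lam) (-(1/2) + ((k : ℝ) + 1) * lam) ∧
      x 1 ∈ Set.Ioo (-(1/2) + (h : ℝ) * lam) (-(1/2) + ((h : ℝ) + 1) * lam)} := rfl
  rw [this, vol_prod _ _ measurableSet_Ioo measurableSet_Ioo]
  rw [Real.volume_Ioo, Real.volume_Ioo]
  congr 1 <;> congr 1 <;> ring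

lemma unitSq_measurable : MeasurableSet unitSq := by
  have : unitSq = ((fun x : Pt => x 0) ⁻¹' Set.Ioo _ _) ∩ ((fun x : Pt => x 1) ⁻¹' Set.Ioo _ _) := rfl
  rw [this]
  exact ((measurable_coord 0) measurableSet_Ioo).inter ((measurable_coord 1) measurableSet_Ioo)

lemma unitSq_volume_lt_top : volume unitSq < ⊤ := by
  have hsub : unitSq ⊆ ball (0 : Pt) 2 := by
    intro x hx
    have h0 : |x 0 - (0:Pt) 0| < 1 := by
      have := hx.1
      simp only [Set.mem_Ioo] at this
      have : |x 0| < 1 := by rw [abs_lt]; constructor <;> linarith [this.1, this.2]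
      simpa using this
    have h1 : |x 1 - (0:Pt) 1| < 1 := by
      have := hx.2
      simp only [Set.mem_Ioo] at this
      have : |x 1| < 1 := by rw [abs_lt]; constructor <;> linarith [this.1, this.2]
      simpa using this
    have := dist_lt_of_coords h0 h1
    rw [mem_ball]
    have hs2 : Real.sqrt 2 < 2 := by
      nlinarith [Real.sq_sqrt (by norm_num : (0:ℝ) ≤ 2), Real.sqrt_nonneg 2]
    calc dist x 0 < Real.sqrt 2 * 1 := this
    _ < 2 := by linarith
  exact lt_of_le_of_lt (measure_mono hsub) measure_ball_lt_top

end GeomScaleAux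


namespace GeomScaleAux

lemma coord_tile {m : ℕ} (hm : 1 ≤ m) {lam u : ℝ} (hlam : lam = 1 / m)
    (hu : u ∈ Set.Ioo (-(1/2):ℝ) (1/2)) (hg : ∀ j : ℕ, u ≠ -(1/2) + j * lam) :
    ∃ k : ℕ, k < m ∧ u ∈ Set.Ioo (-(1/2) + (k:ℝ) * lam) (-(1/2) + ((k:ℝ) + 1) * lam) := by
  have hm0 : (0:ℝ) < m := by exact_mod_cast Nat.lt_of_lt_of_le Nat.zero_lt_one hm
  set t := (u + 1/2) * m with ht
  have ht0 : 0 < t := mul_pos (by linarith [hu.1]) hm0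
  have htm : t < m := by
    have h1 : u + 1/2 < 1 := by linarith [hu.2]
    nlinarith
  set k := ⌊t⌋₊ with hk
  have hk1 : (k:ℝ) ≤ t := Nat.floor_le ht0.le
  have hk2 : t < (k:ℝ) + 1 := Nat.lt_floor_add_one t
  have hkt : (k:ℝ) ≠ t := by
    intro hEq
    apply hg k
    have h2 : u + 1/2 = (k:ℝ)/m := by
      rw [eq_div_iff hm0.ne']
      linarith [hEq]
    rw [hlam, mul_one_div]
    linarith
  have hklt : (k:ℝ) < t := lt_of_le_of_ne hk1 hkt
  have hkm : k < m := by exact_mod_cast lt_of_le_of_lt hk1 htm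
  refine ⟨k, hkm, ?_, ?_⟩
  · have : (k:ℝ) * (1/m) < u + 1/2 := by
      rw [mul_one_div, div_lt_iff₀ hm0]; exact hklt
    rw [hlam]; linarith
  · have : u + 1/2 < ((k:ℝ)+1) * (1/m) := by
      rw [mul_one_div, lt_div_iff₀ hm0]; exact hk2
    rw [hlam]; linarith

lemma tiles_disjoint {lam : ℝ} (hlam : 0 < lam) {k h k' h' : ℕ} (hne : (k,h) ≠ (k',h')) :
    Disjoint (tile lam k h) (tile lam k' h') := by
  rw [Set.disjoint_left]
  intro y hy hy'
  apply hne
  simp only [tile, Set.mem_setOf_eq, Set.mem_Ioo] at hy hy'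
  have key : ∀ a b : ℕ, (a:ℝ) * lam < ((b:ℝ)+1) * lam → a ≤ b := by
    intro a b hab
    have : (a:ℝ) < (b:ℝ)+1 := lt_of_mul_lt_mul_right (by linarith) hlam.le
    have : a < b + 1 := by exact_mod_cast this
    omega
  have e1 : k ≤ k' := key k k' (by linarith [hy.1.1, hy'.1.2])
  have e2 : k' ≤ k := key k' k (by linarith [hy'.1.1, hy.1.2])
  have e3 : h ≤ h' := key h h' (by linarith [hy.2.1, hy'.2.2])
  have e4 : h' ≤ h := key h' h (by linarith [hy'.2.1, hy.2.2])
  ext <;> simp <;> omega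

lemma vol_ball (x : Pt) (r : ℝ) (hr : 0 ≤ r) :
    volume (ball x r) = ENNReal.ofReal (Real.pi * r^2) := by
  rw [EuclideanSpace.volume_ball]
  simp only [Fintype.card_fin]
  rw [show ((2:ℕ):ℝ)/2 + 1 = 2 by norm_num, Real.Gamma_two,
    ← ENNReal.ofReal_pow hr, ← ENNReal.ofReal_mul (by positivity)]
  congr 1
  rw [div_one, Real.sq_sqrt Real.pi_nonneg]
  ring

lemma vol_closedBall (x : Pt) (r : ℝ) (hr : 0 ≤ r) :
    volume (closedBall x r) = ENNReal.ofReal (Real.pi * r^2) := by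
  rw [EuclideanSpace.volume_closedBall]
  simp only [Fintype.card_fin]
  rw [show ((2:ℕ):ℝ)/2 + 1 = 2 by norm_num, Real.Gamma_two,
    ← ENNReal.ofReal_pow hr, ← ENNReal.ofReal_mul (by positivity)]
  congr 1
  rw [div_one, Real.sq_sqrt Real.pi_nonneg]
  ring

end GeomScaleAux

/-- **Lemma (geometric part).** If a bounded function `ρ`, vanishing outside the unit square,
has zero average on every tile of `T_λ`, then `G(ρ) ≤ C₁ λ` with `C₁ = 4√2/κ`. -/
theorem geom_scale_of_tiling (κ : ℝ) (hκ : κ ∈ Set.Ioo (0:ℝ) 1)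
    (lam : ℝ) (hlam : TilingParam lam) (ρ : Pt → ℝ)
    (hmeas : Measurable ρ) (hbdd : ∃ M : ℝ, ∀ x : Pt, |ρ x| ≤ M)
    (hzero : ∀ x : Pt, x ∉ unitSq → ρ x = 0)
    (hmean : ∀ Q : Set Pt, IsTile lam Q → (⨍ y in Q, ρ y) = 0) :
    geomScale κ ρ ≤ (4 * Real.sqrt 2 / κ) * lam := by
  classical
  open GeomScaleAux in
  obtain ⟨m, hm2, hlamEq⟩ := hlam
  have hm0 : (0:ℝ) < m := by
    have : (0:ℕ) < m := by omega
    exact_mod_cast this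
  have hlam0 : 0 < lam := by rw [hlamEq]; positivity
  obtain ⟨M, hM⟩ := hbdd
  set sN := supNorm ρ with hsN
  have hsN0 : 0 ≤ sN := ENNReal.toReal_nonneg
  have hfin : eLpNormEssSup ρ volume ≠ ⊤ :=
    ne_top_of_le_ne_top ENNReal.ofReal_ne_top
      (eLpNormEssSup_le_of_ae_bound (C := M) (ae_of_all _ (fun x => by
        simpa [Real.norm_eq_abs] using hM x)))
  have hae : ∀ᵐ x : Pt, ‖ρ x‖ ≤ sN := by
    filter_upwards [ae_le_eLpNormEssSup (f := ρ) (μ := volume)] with x hx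
    have h2 := ENNReal.toReal_mono hfin hx
    simpa [hsN, supNorm, eLpNorm_exponent_top] using h2
  -- integrability of ρ
  have hQmeas : MeasurableSet unitSq := GeomScaleAux.unitSq_measurable
  have hIntQ : IntegrableOn ρ unitSq := by
    apply Measure.integrableOn_of_bounded (M := M) GeomScaleAux.unitSq_volume_lt_top.ne
      hmeas.aestronglyMeasurable
    exact ae_of_all _ (fun x => by simpa [Real.norm_eq_abs] using hM x)
  have hInt : Integrable ρ := by
    have hρi : ρ = unitSq.indicator ρ := by
      funext x
      by_cases h : x ∈ unitSq
      · simp [h]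
      · simp [h, hzero x h]
    rw [hρi]
    exact (integrable_indicator_iff hQmeas).mpr hIntQ
  -- parameters
  set d := Real.sqrt 2 * lam with hd_def
  set ε := 4 * Real.sqrt 2 / κ * lam with hε_def
  have hs2 : 0 < Real.sqrt 2 := Real.sqrt_pos.mpr (by norm_num)
  have hd0 : 0 < d := mul_pos hs2 hlam0
  have hκ0 := hκ.1
  have hκ1 := hκ.2
  have hκε : κ * ε = 4 * d := by
    rw [hε_def, hd_def]
    field_simp
  have hε0 : 0 < ε := by
    rw [hε_def]; positivity
  have hdε : d < ε := by nlinarith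
  -- the main estimate: every ball of radius ε has small average
  have key : ∀ x : Pt, |⨍ y in ball x ε, ρ y| ≤ κ * sN := by
    intro x
    set B := ball x ε with hB
    set F : Finset (ℕ × ℕ) :=
      (Finset.range m ×ˢ Finset.range m).filter (fun p => tile lam p.1 p.2 ⊆ B) with hF
    set S := ⋃ p ∈ F, tile lam p.1 p.2 with hS
    have hSB : S ⊆ B := by
      apply Set.iUnion₂_subset
      intro p hp
      exact (Finset.mem_filter.mp hp).2
    have hSmeas : MeasurableSet S :=
      F.measurableSet_biUnion (fun p _ => GeomScaleAux.tile_measurable lam p.1 p.2)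
    have hBmeas : MeasurableSet B := measurableSet_ball
    -- integral over S vanishes
    have hS0 : ∫ y in S, ρ y = 0 := by
      rw [hS, integral_biUnion_finset F (fun p _ => GeomScaleAux.tile_measurable lam p.1 p.2)
        (fun p _ q _ hpq => GeomScaleAux.tiles_disjoint hlam0 (by simpa using hpq))
        (fun p _ => hInt.integrableOn)]
      apply Finset.sum_eq_zero
      intro p hp
      have hpm := Finset.mem_filter.mp hp
      have hpr := Finset.mem_product.mp hpm.1
      have hk : p.1 < m := Finset.mem_range.mp hpr.1
      have hh : p.2 < m := Finset.mem_range.mp hpr.2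
      have hTile : IsTile lam (tile lam p.1 p.2) := by
        refine ⟨p.1, p.2, ?_, ?_, rfl⟩
        · rw [hlamEq, mul_one_div, div_le_one hm0]
          exact_mod_cast hk
        · rw [hlamEq, mul_one_div, div_le_one hm0]
          exact_mod_cast hh
      have hmean' := hmean _ hTile
      rw [setAverage_eq, measureReal_def] at hmean'
      have hvol : volume (tile lam p.1 p.2) = ENNReal.ofReal lam * ENNReal.ofReal lam :=
        GeomScaleAux.tile_volume lam hlam0 p.1 p.2
      have hvolR : (volume (tile lam p.1 p.2)).toReal = lam * lam := by
        rw [hvol, ENNReal.toReal_mul, ENNReal.toReal_ofReal hlam0.le]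
      rcases smul_eq_zero.mp hmean' with h | h
      · exfalso
        rw [hvolR] at h
        have : lam * lam ≠ 0 := by positivity
        exact this (inv_eq_zero.mp h)
      · exact h
    -- split the ball integral
    have hsplit : ∫ y in B, ρ y = ∫ y in B \ S, ρ y := by
      have hu := setIntegral_union (f := ρ) (μ := volume) (s := S) (t := B \ S)
        disjoint_sdiff_self_right (hBmeas.diff hSmeas) hInt.integrableOn hInt.integrableOn
      rw [Set.union_diff_cancel hSB] at hu
      rw [hu, hS0, zero_add]
    -- the grid
    set G : Set Pt := {y | (∃ j : ℕ, y 0 = -(1/2) + (j:ℝ) * lam) ∨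
        ∃ j : ℕ, y 1 = -(1/2) + (j:ℝ) * lam} with hG
    have hGnull : volume G = 0 := by
      have hsub : G ⊆ (⋃ j : ℕ, {y : Pt | y 0 = -(1/2) + (j:ℝ) * lam}) ∪
          ⋃ j : ℕ, {y : Pt | y 1 = -(1/2) + (j:ℝ) * lam} := by
        rintro y (⟨j, hj⟩ | ⟨j, hj⟩)
        · exact Or.inl (Set.mem_iUnion.mpr ⟨j, hj⟩)
        · exact Or.inr (Set.mem_iUnion.mpr ⟨j, hj⟩)
      refine measure_mono_null hsub (measure_union_null ?_ ?_)
      · exact measure_iUnion_null fun j => GeomScaleAux.hyperplane_null 0 _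
      · exact measure_iUnion_null fun j => GeomScaleAux.hyperplane_null 1 _
    -- the inclusion
    set N := B \ closedBall x (ε - d) with hN
    have hincl : (B \ S) ∩ unitSq ⊆ N ∪ G := by
      rintro y ⟨⟨hyB, hyS⟩, hyQ⟩
      by_cases hyG : y ∈ G
      · exact Or.inr hyG
      · left
        refine ⟨hyB, ?_⟩
        intro hyC
        apply hyS
        rw [hG, Set.mem_setOf_eq] at hyG
        push_neg at hyG
        obtain ⟨hg0, hg1⟩ := hyG
        obtain ⟨k, hkm, hk⟩ := GeomScaleAux.coord_tile (by omega) hlamEq hyQ.1 hg0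
        obtain ⟨h, hhm, hh⟩ := GeomScaleAux.coord_tile (by omega) hlamEq hyQ.2 hg1
        have hyT : y ∈ tile lam k h := ⟨hk, hh⟩
        have hTB : tile lam k h ⊆ B := by
          intro z hz
          have hz0 : |z 0 - y 0| < lam := by
            rw [abs_lt]
            constructor <;>
              [linarith [hz.1.1, hk.2] ; linarith [hz.1.2, hk.1]]
          have hz1 : |z 1 - y 1| < lam := by
            rw [abs_lt]
            constructor <;>
              [linarith [hz.2.1, hh.2] ; linarith [hz.2.2, hh.1]]
          have hzy : dist z y < d := by
            rw [hd_def]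
            exact GeomScaleAux.dist_lt_of_coords hz0 hz1
          have hyx : dist y x ≤ ε - d := mem_closedBall.mp hyC
          rw [hB, mem_ball]
          calc dist z x ≤ dist z y + dist y x := dist_triangle z y x
          _ < d + (ε - d) := by linarith
          _ = ε := by ring
        have hmemF : (k, h) ∈ F := by
          rw [hF, Finset.mem_filter, Finset.mem_product]
          exact ⟨⟨Finset.mem_range.mpr hkm, Finset.mem_range.mpr hhm⟩, hTB⟩
        exact Set.mem_biUnion hmemF hyT
    -- volume estimate
    have hεd0 : (0:ℝ) ≤ ε - d := by linarith
    have hvolN : volume N = ENNReal.ofReal (Real.pi * ε^2) - ENNReal.ofReal (Real.pi * (ε-d)^2) := by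
      rw [hN, measure_diff (closedBall_subset_ball (by linarith))
        measurableSet_closedBall.nullMeasurableSet measure_closedBall_lt_top.ne,
        GeomScaleAux.vol_ball x ε hε0.le, GeomScaleAux.vol_closedBall x (ε-d) hεd0]
    have hvolNR : (volume N).toReal ≤ Real.pi * ε^2 - Real.pi * (ε-d)^2 := by
      rw [hvolN, ← ENNReal.ofReal_sub _ (by positivity)]
      exact le_of_eq (ENNReal.toReal_ofReal (by
        nlinarith [mul_pos Real.pi_pos (mul_pos hd0 (show (0:ℝ) < 2*ε - d by linarith))]))
    have hvolBle : volume ((B \ S) ∩ unitSq) ≤ volume N := by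
      calc volume ((B \ S) ∩ unitSq) ≤ volume (N ∪ G) := measure_mono hincl
      _ ≤ volume N + volume G := measure_union_le _ _
      _ = volume N := by rw [hGnull, add_zero]
    have hNfin : volume N ≠ ⊤ := by
      refine ne_top_of_le_ne_top ?_ (measure_mono (Set.diff_subset))
      exact measure_ball_lt_top.ne
    -- integral bound
    have hIB : |∫ y in B, ρ y| ≤ sN * (Real.pi * ε^2 - Real.pi * (ε-d)^2) := by
      rw [hsplit]
      have hBSsplit : B \ S = ((B \ S) ∩ unitSq) ∪ ((B \ S) \ unitSq) :=
        (Set.inter_union_diff _ _).symm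
      rw [hBSsplit, setIntegral_union
        (disjoint_sdiff_self_right.mono_left Set.inter_subset_right)
        ((hBmeas.diff hSmeas).diff hQmeas) hInt.integrableOn hInt.integrableOn,
        setIntegral_eq_zero_of_forall_eq_zero (t := (B \ S) \ unitSq)
          (fun y hy => hzero y hy.2), add_zero]
      have hb : |∫ y in (B \ S) ∩ unitSq, ρ y| ≤ sN * (volume ((B \ S) ∩ unitSq)).toReal := by
        rw [← Real.norm_eq_abs]
        exact norm_setIntegral_le_of_norm_le_const_ae
          (lt_of_le_of_lt (measure_mono (Set.inter_subset_left.trans Set.diff_subset))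
            measure_ball_lt_top)
          (ae_restrict_of_ae hae)
      refine hb.trans ?_
      apply mul_le_mul_of_nonneg_left _ hsN0
      calc (volume ((B \ S) ∩ unitSq)).toReal ≤ (volume N).toReal :=
        ENNReal.toReal_mono hNfin hvolBle
      _ ≤ Real.pi * ε^2 - Real.pi * (ε-d)^2 := hvolNR
    -- average bound
    have hvolB : (volume B).toReal = Real.pi * ε^2 := by
      rw [hB, GeomScaleAux.vol_ball x ε hε0.le, ENNReal.toReal_ofReal (by positivity)]
    rw [setAverage_eq, measureReal_def, smul_eq_mul, abs_mul, abs_of_nonneg (by rw [hvolB]; positivity), hvolB]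
    calc (Real.pi * ε^2)⁻¹ * |∫ y in B, ρ y|
        ≤ (Real.pi * ε^2)⁻¹ * (sN * (Real.pi * ε^2 - Real.pi * (ε-d)^2)) := by
          apply mul_le_mul_of_nonneg_left hIB (by positivity)
    _ ≤ κ * sN := by
        rw [inv_mul_le_iff₀ (by positivity)]
        have hεκ2 : κ * ε^2 = 4 * d * ε := by
          rw [pow_two, ← mul_assoc, hκε]
        nlinarith [mul_nonneg (mul_nonneg (mul_nonneg hsN0 Real.pi_pos.le) hd0.le) hε0.le,
          mul_nonneg (mul_nonneg (mul_nonneg hsN0 Real.pi_pos.le) hd0.le) hd0.le,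
          Real.pi_pos, mul_nonneg hsN0 Real.pi_pos.le]
  -- conclude via sInf
  have hmem : ε ∈ {r : ℝ | 0 < r ∧ ∀ x : Pt, |⨍ y in ball x r, ρ y| ≤ κ * supNorm ρ} :=
    ⟨hε0, key⟩
  have hbdd' : BddBelow {r : ℝ | 0 < r ∧ ∀ x : Pt, |⨍ y in ball x r, ρ y| ≤ κ * supNorm ρ} :=
    ⟨0, fun y hy => hy.1.le⟩
  calc geomScale κ ρ ≤ ε := csInf_le hbdd' hmem
  _ = 4 * Real.sqrt 2 / κ * lam := hε_def ▸ rfl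


end
end

section
/- (Minimal cost, simplified geometric version.) Let p > 1, a > 0, and let u be a divergence-free velocity field on [0,1] vanishing outside Q, with flow map Φ = Φ(1,·), and assume Lip(Φ^{−1}) ≤ exp(∫₀¹‖∇u(s,·)‖_{L^p}ds). Let ρ solve the continuity equation with initial datum equal to 1 on a set A ⊂ Q and to a mean-zero-making constant c ∈ [−1,0) on Q∖A, 0 < |A| ≤ 1/2, and suppose there is a ball B = B(x,r) ⊂ Q with r ≥ (3/4)a and B ⊂ A. Let λ be a tiling parameter with λ ≤ 3a/(16√2), and suppose ∫_Q ρ(1,y)dy = 0 for every tile Q ∈ T_λ. Then ∫₀¹‖∇u(s,·)‖_{L^p}ds ≥ log 2 > 0. -/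
open MeasureTheory Metric Set Filter ENNReal Topology

noncomputable section

lemma continuous_coord (i : Fin 2) : Continuous fun x : Pt => x i := (EuclideanSpace.proj (𝕜 := ℝ) i).continuous

lemma isOpen_box (a b c d : ℝ) :
    IsOpen {x : Pt | x 0 ∈ Set.Ioo a b ∧ x 1 ∈ Set.Ioo c d} :=
  (isOpen_Ioo.preimage (continuous_coord 0)).inter (isOpen_Ioo.preimage (continuous_coord 1))

lemma isOpen_unitSq : IsOpen unitSq := by unfold unitSq; exact isOpen_box _ _ _ _

lemma isOpen_tile (lam : ℝ) (k h : ℕ) : IsOpen (tile lam k h) := by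
  unfold tile; exact isOpen_box _ _ _ _

lemma tileCenter_mem (lam : ℝ) (hl : 0 < lam) (k h : ℕ) :
    tileCenter lam k h ∈ tile lam k h := by
  have h0 : (tileCenter lam k h) 0 = -(1/2) + ((k:ℝ) + 1/2) * lam := by
    simp [tileCenter, PiLp.add_apply, EuclideanSpace.single_apply]
  have h1 : (tileCenter lam k h) 1 = -(1/2) + ((h:ℝ) + 1/2) * lam := by
    simp [tileCenter, PiLp.add_apply, EuclideanSpace.single_apply]
  constructor
  · rw [h0]; constructor <;> nlinarith
  · rw [h1]; constructor <;> nlinarith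

lemma choose_idx (m : ℕ) (hm : 2 ≤ m) (lam : ℝ) (hlameq : lam = 1 / (m:ℝ)) (w : ℝ)
    (hw1 : -(1/2) ≤ w) (hw2 : w ≤ 1/2) :
    ∃ k : ℕ, ((k:ℝ) + 1) * lam ≤ 1 ∧ -(1/2) + (k:ℝ) * lam ≤ w ∧
      w ≤ -(1/2) + ((k:ℝ) + 1) * lam := by
  have hm0 : (0:ℝ) < (m:ℝ) := by positivity
  set t : ℝ := (w + 1/2) * m with ht
  have h0t : 0 ≤ t := mul_nonneg (by linarith) hm0.le
  have htm : t ≤ (m:ℝ) := by nlinarith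
  refine ⟨min ⌊t⌋₊ (m - 1), ?_, ?_, ?_⟩
  all_goals
    have hkt : ((min ⌊t⌋₊ (m-1) : ℕ):ℝ) ≤ t := by
      calc ((min ⌊t⌋₊ (m-1) : ℕ):ℝ) ≤ (⌊t⌋₊:ℝ) := by exact_mod_cast Nat.min_le_left _ _
        _ ≤ t := Nat.floor_le h0t
    have htk : t ≤ ((min ⌊t⌋₊ (m-1) : ℕ):ℝ) + 1 := by
      rcases le_or_gt ⌊t⌋₊ (m - 1) with hle | hlt
      · rw [min_eq_left hle]; exact (Nat.lt_floor_add_one t).le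
      · rw [min_eq_right hlt.le]
        have : ((m - 1 : ℕ):ℝ) = (m:ℝ) - 1 := by
          have : 1 ≤ m := by omega
          push_cast [Nat.cast_sub this]; ring
        rw [this]; linarith
    have hkm : ((min ⌊t⌋₊ (m-1) : ℕ):ℝ) + 1 ≤ (m:ℝ) := by
      have : min ⌊t⌋₊ (m-1) + 1 ≤ m := by omega
      exact_mod_cast this
  · rw [hlameq]
    rw [mul_one_div, div_le_one hm0]; linarith
  · rw [hlameq, mul_one_div]
    rw [← sub_nonneg]
    have : ((min ⌊t⌋₊ (m-1) : ℕ):ℝ) / m ≤ w + 1/2 := by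
      rw [div_le_iff₀ hm0]; nlinarith
    linarith
  · rw [hlameq, mul_one_div]
    have : w + 1/2 ≤ (((min ⌊t⌋₊ (m-1) : ℕ):ℝ) + 1) / m := by
      rw [le_div_iff₀ hm0]; nlinarith
    linarith

/-- **Minimal cost, simplified geometric version.** Suppose the time-1 flow map `Φ` of the
divergence-free field `u` (supported in the unit square) has inverse `Ψ` with
`Lip(Φ⁻¹) ≤ exp(∫₀¹‖∇u‖_{L^p})`, the initial datum is binary mean-free with a ball
`B(x₀,r) ⊆ A`, `r ≥ (3/4)a`, and the tracer is equally distributed among the tiles of a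
tiling of parameter `λ ≤ 3a/(16√2)` at time `1`. Then `∫₀¹‖∇u(s,·)‖_{L^p} ds ≥ log 2 > 0`. -/
theorem minimal_cost_geometric (p a lam c : ℝ) (hp : 1 < p) (ha : 0 < a)
    (u : ℝ → Pt → Pt) (Φ Ψ : Pt → Pt)
    (hdiv : ∀ t ∈ Set.Icc (0:ℝ) 1, DivFree (u t))
    (hu0 : ∀ t : ℝ, ∀ x : Pt, x ∉ unitSq → u t x = 0)
    (hflow : ∃ X : ℝ → Pt → Pt, IsFlowMap u X ∧ X 1 = Φ)
    (hΨl : Function.LeftInverse Ψ Φ) (hΨr : Function.RightInverse Ψ Φ)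
    (hLip : ∀ x y : Pt, dist (Ψ x) (Ψ y) ≤
      Real.exp (∫ t in Set.Icc (0:ℝ) 1, gradLp p (u t)) * dist x y)
    (ρ0 : Pt → ℝ) (A : Set Pt) (hA : MeasurableSet A) (hAQ : A ⊆ unitSq)
    (hA0 : 0 < volume A) (hA2 : volume A ≤ ENNReal.ofReal (1 / 2))
    (hρA : ∀ x ∈ A, ρ0 x = 1) (hρc : ∀ x ∈ unitSq \ A, ρ0 x = c)
    (hρout : ∀ x : Pt, x ∉ unitSq → ρ0 x = 0)
    (hc : -1 ≤ c ∧ c < 0) (hmean : (∫ x in unitSq, ρ0 x) = 0)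
    (x0 : Pt) (r : ℝ) (hr : 3 / 4 * a ≤ r)
    (hBQ : ball x0 r ⊆ unitSq) (hBA : ball x0 r ⊆ A)
    (hlam : TilingParam lam) (hlam' : lam ≤ 3 * a / (16 * Real.sqrt 2))
    (hmix : ∀ Q : Set Pt, IsTile lam Q → ∫ y in Q, ρ0 (Ψ y) = 0) :
    Real.log 2 ≤ ∫ t in Set.Icc (0:ℝ) 1, gradLp p (u t) := by
  set C : ℝ := ∫ t in Set.Icc (0:ℝ) 1, gradLp p (u t) with hCdef
  by_contra hCon
  push_neg at hCon
  set L : ℝ := Real.exp C with hLdef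
  have hL0 : 0 < L := Real.exp_pos C
  have hL2 : L < 2 := by
    rw [hLdef, ← Real.exp_log (by norm_num : (0:ℝ) < 2)]
    exact Real.exp_lt_exp.mpr hCon
  obtain ⟨m, hm2, hlameq⟩ := hlam
  have hm0 : (0:ℝ) < (m:ℝ) := by positivity
  have hlam0 : 0 < lam := by rw [hlameq]; positivity
  -- the flow
  obtain ⟨X, ⟨hX0, hXd, hXmp⟩, hX1⟩ := hflow
  set f : ℝ → Pt := fun t => X t x0 with hfdef
  have hfd : ∀ t, HasDerivAt f (u t (f t)) t := fun t => hXd x0 t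
  have hfc : Continuous f := continuous_iff_continuousAt.mpr fun t => (hfd t).continuousAt
  have hr0 : 0 < r := lt_of_lt_of_le (by linarith) hr
  have hx0Q : x0 ∈ unitSq := hBQ (mem_ball_self hr0)
  have hf0 : f 0 = x0 := hX0 x0
  have hf1 : f 1 = Φ x0 := by rw [hfdef]; simp [hX1]
  -- the time-1 position is in the closure of the square
  have hw : Φ x0 ∈ closure unitSq := by
    by_contra hcl
    set S : Set ℝ := Set.Icc 0 1 ∩ f ⁻¹' (closure unitSq) with hS
    have hS0 : (0:ℝ) ∈ S := ⟨⟨le_refl 0, zero_le_one⟩, by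
      simp only [Set.mem_preimage, hf0]; exact subset_closure hx0Q⟩
    have hScl : IsClosed S := isClosed_Icc.inter (isClosed_closure.preimage hfc)
    have hSbdd : BddAbove S := ⟨1, fun t ht => ht.1.2⟩
    set α := sSup S with hα
    have hαS : α ∈ S := hScl.csSup_mem ⟨0, hS0⟩ hSbdd
    have hα01 : α ∈ Set.Icc (0:ℝ) 1 := hαS.1
    have hα1 : α < 1 := by
      rcases lt_or_eq_of_le hα01.2 with h | h
      · exact h
      · exfalso; apply hcl; rw [← hf1]
        have := hαS.2; rw [h] at this; exact this
    have hnotin : ∀ t, α < t → t ≤ 1 → f t ∉ closure unitSq := by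
      intro t ht1 ht2 hmem
      exact absurd (le_csSup hSbdd ⟨⟨le_trans hα01.1 ht1.le, ht2⟩, hmem⟩) (not_le.mpr ht1)
    have hαnot : f α ∉ unitSq := by
      intro hmem
      have hop : IsOpen (f ⁻¹' unitSq) := isOpen_unitSq.preimage hfc
      obtain ⟨ε, hε, hball⟩ := Metric.isOpen_iff.mp hop α hmem
      set t : ℝ := min (α + ε/2) ((α + 1)/2) with htdef
      have ht1 : α < t := lt_min (by linarith) (by linarith)
      have ht2 : t ≤ 1 := le_trans (min_le_right _ _) (by linarith)
      have htb : t ∈ Metric.ball α ε := by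
        rw [Metric.mem_ball, Real.dist_eq, abs_of_pos (by linarith)]
        calc t - α ≤ (α + ε/2) - α := by
              have := min_le_left (α + ε/2) ((α + 1)/2); linarith
          _ < ε := by linarith
      exact hnotin t ht1 ht2 (subset_closure (hball htb))
    have hderiv : ∀ t ∈ Set.Ico α 1, HasDerivWithinAt f 0 (Set.Ici t) t := by
      intro t ht
      have hne : f t ∉ unitSq := by
        rcases eq_or_lt_of_le ht.1 with he | hl
        · rw [← he]; exact hαnot
        · exact fun h => hnotin t hl ht.2.le (subset_closure h)
      have hd := hfd t
      rw [hu0 t (f t) hne] at hd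
      exact hd.hasDerivWithinAt
    have hconst := constant_of_has_deriv_right_zero
      (hfc.continuousOn : ContinuousOn f (Set.Icc α 1)) hderiv 1 ⟨hα1.le, le_refl 1⟩
    apply hcl
    rw [← hf1, hconst]
    exact hαS.2
  -- coordinates of w := Φ x0 lie in the closed square
  set w : Pt := Φ x0 with hwdef
  have hbox : closure unitSq ⊆
      {x : Pt | x 0 ∈ Set.Icc (-(1/2):ℝ) (1/2)} ∩ {x : Pt | x 1 ∈ Set.Icc (-(1/2):ℝ) (1/2)} := by
    apply closure_minimal
    · intro x hx
      exact ⟨⟨hx.1.1.le, hx.1.2.le⟩, ⟨hx.2.1.le, hx.2.2.le⟩⟩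
    · exact (isClosed_Icc.preimage (continuous_coord 0)).inter
        (isClosed_Icc.preimage (continuous_coord 1))
  have hw0 : w 0 ∈ Set.Icc (-(1/2):ℝ) (1/2) := (hbox hw).1
  have hw1 : w 1 ∈ Set.Icc (-(1/2):ℝ) (1/2) := (hbox hw).2
  -- choose the tile containing w
  obtain ⟨kk, hkk1, hkk2, hkk3⟩ := choose_idx m hm2 lam hlameq (w 0) hw0.1 hw0.2
  obtain ⟨hh, hhh1, hhh2, hhh3⟩ := choose_idx m hm2 lam hlameq (w 1) hw1.1 hw1.2
  have hTile : IsTile lam (tile lam kk hh) := ⟨kk, hh, hkk1, hhh1, rfl⟩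
  -- sqrt 2 facts
  set s2 : ℝ := Real.sqrt 2 with hs2def
  have hs20 : 0 < s2 := Real.sqrt_pos.mpr (by norm_num)
  have hs2sq : s2 ^ 2 = 2 := Real.sq_sqrt (by norm_num)
  have h2lam : s2 * lam ≤ 3 * a / 16 := by
    have h1 : s2 * lam ≤ s2 * (3 * a / (16 * s2)) :=
      mul_le_mul_of_nonneg_left hlam' hs20.le
    have h2 : s2 * (3 * a / (16 * s2)) = 3 * a / 16 := by
      field_simp
    linarith
  -- every point of the tile is mapped by Ψ into the ball
  have hρΨ : ∀ y ∈ tile lam kk hh, ρ0 (Ψ y) = 1 := by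
    intro y hy
    obtain ⟨hy0, hy1⟩ := hy
    apply hρA _ (hBA _)
    rw [mem_ball]
    have hd0 : |y 0 - w 0| < lam := by
      rw [abs_lt]; constructor <;> [linarith only [hy0.1, hkk3]; linarith only [hy0.2, hkk2]]
    have hd1 : |y 1 - w 1| < lam := by
      rw [abs_lt]; constructor <;> [linarith only [hy1.1, hhh3]; linarith only [hy1.2, hhh2]]
    have hdyw : dist y w < s2 * lam := by
      rw [EuclideanSpace.dist_eq, Fin.sum_univ_two,
        Real.sqrt_lt' (mul_pos hs20 hlam0), Real.dist_eq, Real.dist_eq]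
      have e0 : (y 0 - w 0) ^ 2 < lam ^ 2 :=
        sq_lt_sq' (abs_lt.mp hd0).1 (abs_lt.mp hd0).2
      have e1 : (y 1 - w 1) ^ 2 < lam ^ 2 :=
        sq_lt_sq' (abs_lt.mp hd1).1 (abs_lt.mp hd1).2
      calc |y 0 - w 0| ^ 2 + |y 1 - w 1| ^ 2 = (y 0 - w 0) ^ 2 + (y 1 - w 1) ^ 2 := by
            rw [sq_abs, sq_abs]
        _ < 2 * lam ^ 2 := by linarith only [e0, e1]
        _ = (s2 * lam) ^ 2 := by rw [mul_pow, hs2sq]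
    have hΨd : dist (Ψ y) x0 ≤ L * dist y w := by
      have h := hLip y (Φ x0)
      rw [hΨl x0] at h
      exact h
    calc dist (Ψ y) x0 ≤ L * dist y w := hΨd
      _ ≤ L * (s2 * lam) := mul_le_mul_of_nonneg_left hdyw.le hL0.le
      _ < 2 * (s2 * lam) := mul_lt_mul_of_pos_right hL2 (mul_pos hs20 hlam0)
      _ ≤ 2 * (3 * a / 16) := by linarith only [h2lam, hs20, hlam0]
      _ < r := by linarith only [hr, ha]
  -- compute the integral over the tile
  have hQmeas : MeasurableSet (tile lam kk hh) := (isOpen_tile lam kk hh).measurableSet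
  have hQsub : tile lam kk hh ⊆ ball w (s2 * lam) := by
    intro y hy
    obtain ⟨hy0, hy1⟩ := hy
    rw [mem_ball, EuclideanSpace.dist_eq, Fin.sum_univ_two,
      Real.sqrt_lt' (mul_pos hs20 hlam0), Real.dist_eq, Real.dist_eq]
    have hd0 : |y 0 - w 0| < lam := by
      rw [abs_lt]; constructor <;> [linarith only [hy0.1, hkk3]; linarith only [hy0.2, hkk2]]
    have hd1 : |y 1 - w 1| < lam := by
      rw [abs_lt]; constructor <;> [linarith only [hy1.1, hhh3]; linarith only [hy1.2, hhh2]]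
    have e0 : (y 0 - w 0) ^ 2 < lam ^ 2 :=
      sq_lt_sq' (abs_lt.mp hd0).1 (abs_lt.mp hd0).2
    have e1 : (y 1 - w 1) ^ 2 < lam ^ 2 :=
      sq_lt_sq' (abs_lt.mp hd1).1 (abs_lt.mp hd1).2
    calc |y 0 - w 0| ^ 2 + |y 1 - w 1| ^ 2 = (y 0 - w 0) ^ 2 + (y 1 - w 1) ^ 2 := by
          rw [sq_abs, sq_abs]
      _ < 2 * lam ^ 2 := by linarith only [e0, e1]
      _ = (s2 * lam) ^ 2 := by rw [mul_pow, hs2sq]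
  have hQfin : volume (tile lam kk hh) ≠ ⊤ :=
    (lt_of_le_of_lt (measure_mono hQsub) measure_ball_lt_top).ne
  have hQpos : 0 < volume (tile lam kk hh) :=
    (isOpen_tile lam kk hh).measure_pos volume ⟨tileCenter lam kk hh, tileCenter_mem lam hlam0 kk hh⟩
  have hint : ∫ y in tile lam kk hh, ρ0 (Ψ y) = (volume (tile lam kk hh)).toReal := by
    rw [MeasureTheory.setIntegral_congr_fun hQmeas (fun y hy => hρΨ y hy)]
    rw [MeasureTheory.setIntegral_const]
    simp
    rfl
  have hzero := hmix (tile lam kk hh) hTile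
  rw [hint] at hzero
  have : 0 < (volume (tile lam kk hh)).toReal := ENNReal.toReal_pos hQpos.ne' hQfin
  linarith


end
end
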